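/- Let F ∈ F^{M×K} and G ∈ F^{N×K} over a field, with I ⊆ [K] satisfying rank([F_I; G_I]) = rank(F_I) + N. Then there exists P ∈ F^{K×N} such that F·P = 0, rank(G·P) = N, and every row of P indexed outside I is zero. -/
import Mathlib


/-- The submatrix of `A` formed by the columns indexed by the subset `I`. -/
def colSub {𝔽 : Type*} {M K : ℕ} (A : Matrix (Fin M) (Fin K) 𝔽) (I : Finset (Fin K)) :
    Matrix (Fin M) {x // x ∈ I} 𝔽 :=
  A.submatrix id Subtype.val

set_option maxHeartbeats 1000000 in
set_option synthInstance.maxHeartbeats 200000 in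
/-- If `I` satisfies the rank-increment condition, then there is an encoding
matrix `P` supported on the rows in `I`, i.e. `F * P = 0`, `rank (G * P) = N`,
and every row of `P` outside `I` is zero. -/
theorem exists_encoding_matrix_supported
    {𝔽 : Type*} [Field 𝔽] {M N K : ℕ}
    (F : Matrix (Fin M) (Fin K) 𝔽) (G : Matrix (Fin N) (Fin K) 𝔽)
    (I : Finset (Fin K))
    (hI : (Matrix.fromRows (colSub F I) (colSub G I)).rank = (colSub F I).rank + N) :
    ∃ P : Matrix (Fin K) (Fin N) 𝔽, F * P = 0 ∧ (G * P).rank = N ∧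
      ∀ k ∉ I, ∀ j, P k j = 0 := by
  classical
  set A := colSub F I with hA
  set B := colSub G I with hB
  set fA := A.mulVecLin with hfA
  set fB := B.mulVecLin with hfB
  set L : ({x // x ∈ I} → 𝔽) →ₗ[𝔽] (Fin M → 𝔽) × (Fin N → 𝔽) := fA.prod fB with hL
  let e := LinearEquiv.sumArrowLequivProdArrow (Fin M) (Fin N) 𝔽 𝔽
  have hLcomp : L = e.toLinearMap ∘ₗ (Matrix.fromRows A B).mulVecLin := by
    apply LinearMap.ext; intro v
    apply Prod.ext
    · funext i
      simp [L, e, hfA, Matrix.fromRows_mulVec]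
    · funext i
      simp [L, e, hfB, Matrix.fromRows_mulVec]
  have hrankL : Module.finrank 𝔽 (LinearMap.range L) = (Matrix.fromRows A B).rank := by
    rw [hLcomp, LinearMap.range_comp]
    rw [LinearEquiv.finrank_map_eq]
    rfl
  have rn1 := LinearMap.finrank_range_add_finrank_ker L
  have rn2 := LinearMap.finrank_range_add_finrank_ker fA
  set g : (LinearMap.ker fA) →ₗ[𝔽] (Fin N → 𝔽) := fB.comp (LinearMap.ker fA).subtype with hg
  have rn3 := LinearMap.finrank_range_add_finrank_ker g
  have hkerg : Module.finrank 𝔽 (LinearMap.ker g) = Module.finrank 𝔽 (LinearMap.ker L) := by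
    have h1 : LinearMap.ker g =
        Submodule.comap (LinearMap.ker fA).subtype (LinearMap.ker fA ⊓ LinearMap.ker fB) := by
      ext x
      simp [hg, LinearMap.mem_ker, x.2]
    rw [h1, hL, LinearMap.ker_prod]
    exact (Submodule.comapSubtypeEquivOfLe inf_le_left).finrank_eq
  have hrA : Module.finrank 𝔽 (LinearMap.range fA) = A.rank := rfl
  have hrg : Module.finrank 𝔽 (LinearMap.range g) = N := by
    have hIr : Module.finrank 𝔽 (LinearMap.range L) = A.rank + N := by
      rw [hrankL]; exact hI
    omega
  have hgsurj : ∀ j : Fin N, ∃ x : {x // x ∈ I} → 𝔽, fA x = 0 ∧ fB x = Pi.single j 1 := by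
    have htop : LinearMap.range g = ⊤ := by
      apply Submodule.eq_top_of_finrank_eq
      rw [hrg]
      simp
    intro j
    have : (Pi.single j 1 : Fin N → 𝔽) ∈ LinearMap.range g := by rw [htop]; trivial
    obtain ⟨⟨x, hx⟩, hgx⟩ := this
    exact ⟨x, LinearMap.mem_ker.mp hx, hgx⟩
  choose p hp1 hp2 using hgsurj
  set P : Matrix (Fin K) (Fin N) 𝔽 :=
    fun k j => if h : k ∈ I then p j ⟨k, h⟩ else 0 with hP
  have key : ∀ (m : ℕ) (H : Matrix (Fin m) (Fin K) 𝔽) (i : Fin m) (j : Fin N),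
      (H * P) i j = (colSub H I).mulVec (p j) i := by
    intro m H i j
    rw [Matrix.mul_apply, Matrix.mulVec, dotProduct]
    rw [← Finset.sum_subset (Finset.subset_univ I) (by
      intro k _ hk
      simp [hP, hk])]
    rw [← Finset.sum_coe_sort I (fun k => H i k * P k j)]
    apply Finset.sum_congr rfl
    intro k _
    simp [hP, k.2, colSub]
  refine ⟨P, ?_, ?_, fun k hk j => by simp [hP, hk]⟩
  · ext i j
    rw [key M F i j, ← hA]
    have := hp1 j
    rw [hfA] at this
    simpa using congrFun this i
  · have hGP : G * P = 1 := by
      ext i j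
      rw [key N G i j, ← hB]
      have := hp2 j
      rw [hfB] at this
      have := congrFun this i
      simp only [Matrix.mulVecLin_apply] at this
      rw [this, Matrix.one_apply, Pi.single_apply]
    rw [hGP, Matrix.rank_one]
    simp
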